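/- Theorem 1 (networked agents outperform centralised agents in expectation). Let N ≥ 1, τ > 0, and let V : Fin N → ℝ (true discounted returns of the N candidate policies) and σ : Fin N → ℝ (their finite-horizon approximations) satisfy the order-preservation property (Assumption 1): for all i, j, σ i > σ j ↔ V i > V j. Assume V is not constant. Let p be the softmax distribution with temperature τ associated to σ. Then ∑ i, p i * V i > (1/N) * ∑ i, V i; that is, the expected true return of the policy adopted by the networked population (sampled with probability proportional to exp(σ i / τ)) strictly exceeds the expected true return of the policy adopted by the centralised population (a uniformly random index). -/

import Mathlib

open Finset Real

/-- The softmax distribution with temperature `τ` associated to `σ : Fin N → ℝ`. -/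
noncomputable def softmax {N : ℕ} (τ : ℝ) (σ : Fin N → ℝ) (i : Fin N) : ℝ :=
  Real.exp (σ i / τ) / ∑ j, Real.exp (σ j / τ)

/-- Theorem 1: if the finite-horizon approximations `σ` preserve the ordering of the
true returns `V` (Assumption 1) and `V` is not constant, then the expected true return
of the policy adopted via softmax selection over `σ` (networked population) strictly
exceeds that of a uniformly random policy (centralised population). -/
theorem networked_outperforms_centralised
    (N : ℕ) (hN : 1 ≤ N) (τ : ℝ) (hτ : 0 < τ)
    (V σ : Fin N → ℝ)
    (horder : ∀ i j, σ i > σ j ↔ V i > V j)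
    (hV : ∃ i j, V i ≠ V j) :
    ∑ i, softmax τ σ i * V i > (1 / N) * ∑ i, V i := by
  set w : Fin N → ℝ := fun i => Real.exp (σ i / τ) with hw
  have hwpos : ∀ i, 0 < w i := fun i => Real.exp_pos _
  have hNE : (Finset.univ : Finset (Fin N)).Nonempty := by
    simpa [Finset.univ_nonempty_iff] using Fin.pos_iff_nonempty.mp hN
  have hS : 0 < ∑ j, w j := Finset.sum_pos (fun i _ => hwpos i) hNE
  have hmono : ∀ i j, V j < V i → w j < w i := by
    intro i j h
    have : σ j < σ i := (horder i j).mpr h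
    exact Real.exp_lt_exp.mpr (by gcongr)
  have hterm : ∀ i j : Fin N, 0 ≤ (w i - w j) * (V i - V j) := by
    intro i j
    rcases lt_trichotomy (V i) (V j) with h | h | h
    · have := hmono j i h
      nlinarith
    · simp [h]
    · have := hmono i j h
      nlinarith
  have hpospair : ∃ i j : Fin N, 0 < (w i - w j) * (V i - V j) := by
    obtain ⟨i, j, hij⟩ := hV
    rcases lt_or_gt_of_ne hij with h | h
    · exact ⟨j, i, by have := hmono j i h; nlinarith⟩
    · exact ⟨i, j, by have := hmono i j h; nlinarith⟩
  have hdouble : 0 < ∑ i, ∑ j, (w i - w j) * (V i - V j) := by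
    obtain ⟨i0, j0, hp⟩ := hpospair
    have inner : 0 < ∑ j, (w i0 - w j) * (V i0 - V j) :=
      Finset.sum_pos' (fun j _ => hterm i0 j) ⟨j0, Finset.mem_univ _, hp⟩
    exact Finset.sum_pos' (fun i _ => Finset.sum_nonneg (fun j _ => hterm i j))
      ⟨i0, Finset.mem_univ _, inner⟩
  have expand : ∑ i, ∑ j, (w i - w j) * (V i - V j)
      = 2 * ((N : ℝ) * ∑ i, w i * V i - (∑ i, w i) * (∑ i, V i)) := by
    simp only [sub_mul, mul_sub, Finset.sum_sub_distrib, Finset.sum_sub_distrib,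
      Finset.sum_const, Finset.card_univ, Fintype.card_fin, nsmul_eq_mul,
      ← Finset.sum_mul, ← Finset.mul_sum]
    ring
  have key : (∑ i, w i) * (∑ i, V i) < (N : ℝ) * ∑ i, w i * V i := by
    rw [expand] at hdouble; linarith
  have hNpos : (0 : ℝ) < N := by exact_mod_cast hN
  have : ∑ i, softmax τ σ i * V i = (∑ i, w i * V i) / (∑ j, w j) := by
    simp only [softmax, div_mul_eq_mul_div, ← Finset.sum_div]
    rfl
  rw [this, gt_iff_lt, lt_div_iff₀ hS, one_div, inv_mul_eq_div, div_mul_eq_mul_div,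
    div_lt_iff₀ hNpos]
  nlinarith
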